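/- (i) h(u, v) = 0 for every u ∈ Y and every v ∈ Z; (ii) conversely, if u ∈ X satisfies h(u, v) = 0 for all v ∈ Z, then u ∈ Y (Y is the h-orthogonal complement of Z); (iii) for v ∈ Z written as v_i = Σ_α λ_{α,i} w_i^α, the restriction of h to Z is h(v, v) = Σ_{i=1}^n Σ_{α,β} g_i^{αβ} (λ_{α,i+1} − λ_{α,i})(λ_{β,i+1} − λ_{β,i}), where λ_{α,n+1} = λ_{α,1}. -/

import Mathlib

open Matrix BigOperators

/-- The Hessian bilinear form
`h(u,v) = Σ_i (A_i u_i - B_{i-1} u_{i-1} - B_iᵀ u_{i+1}) · v_i` (cyclic). -/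
noncomputable def hForm (m n : ℕ) [NeZero n] (A B : ℤ → Matrix (Fin m) (Fin m) ℝ)
    (u v : Fin n → Fin m → ℝ) : ℝ :=
  ∑ i : Fin n,
    (A ((i : ℕ) : ℤ) *ᵥ u i - B (((i : ℕ) : ℤ) - 1) *ᵥ u (i - 1)
      - (B ((i : ℕ) : ℤ))ᵀ *ᵥ u (i + 1)) ⬝ᵥ v i

/-- `u ∈ Y`: each first integral `I_i^α(u_i, u_{i+1})` takes the same value
for all `i`. -/
def memY (m n k : ℕ) [NeZero n] (B : ℤ → Matrix (Fin m) (Fin m) ℝ)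
    (w : Fin k → ℤ → (Fin m → ℝ)) (u : Fin n → Fin m → ℝ) : Prop :=
  ∀ α : Fin k, ∀ i j : Fin n,
    (B ((i : ℕ) : ℤ) *ᵥ w α ((i : ℕ) : ℤ)) ⬝ᵥ u (i + 1)
        - (B ((i : ℕ) : ℤ) *ᵥ u i) ⬝ᵥ w α (((i : ℕ) : ℤ) + 1)
      = (B ((j : ℕ) : ℤ) *ᵥ w α ((j : ℕ) : ℤ)) ⬝ᵥ u (j + 1)
        - (B ((j : ℕ) : ℤ) *ᵥ u j) ⬝ᵥ w α (((j : ℕ) : ℤ) + 1)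

section Aux

/-- A periodic function on `ℤ` takes equal values at points congruent mod `n`. -/
lemma per_congr {X : Type*} (n : ℕ) (f : ℤ → X) (hf : ∀ i, f (i + n) = f i)
    {a b : ℤ} (h : a % n = b % n) : f a = f b := by
  have key : ∀ t : ℤ, f (a + n * t) = f a := by
    intro t
    induction t using Int.induction_on with
    | zero => simp
    | succ s ih =>
        have h1 : a + (n : ℤ) * (s + 1) = a + n * s + n := by ring
        rw [h1, hf (a + n * s), ih]
    | pred s ih =>
        have h1 : a + (n : ℤ) * (-s - 1) + n = a + n * (-s) := by ring
        have h2 := hf (a + n * (-(s : ℤ) - 1))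
        rw [h1] at h2
        rw [← h2]
        exact ih
  obtain ⟨t, ht⟩ : (n : ℤ) ∣ b - a := Int.ModEq.dvd h
  have hb : b = a + n * t := by linarith
  rw [hb]
  exact (key t).symm

lemma val_succ_mod (n : ℕ) [NeZero n] (i : Fin n) :
    (((i + 1 : Fin n) : ℕ) : ℤ) % n = ((((i : ℕ) : ℤ)) + 1) % n := by
  rw [Fin.val_add]
  push_cast
  simp [Int.add_emod, Int.emod_emod_of_dvd]

lemma val_succ_sub_mod (n : ℕ) [NeZero n] (i : Fin n) :
    ((((i + 1 : Fin n) : ℕ) : ℤ) - 1) % n = (((i : ℕ) : ℤ)) % n := by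
  have h := Int.ModEq.sub_right 1 (val_succ_mod n i)
  simpa [Int.ModEq] using h

lemma dot_sum_right {m : ℕ} {ι : Type*} (x : Fin m → ℝ) (s : Finset ι)
    (f : ι → Fin m → ℝ) : x ⬝ᵥ (∑ a ∈ s, f a) = ∑ a ∈ s, x ⬝ᵥ f a := by
  simp only [dotProduct, Finset.sum_apply, Finset.mul_sum]
  rw [Finset.sum_comm]

lemma dot_sum_left {m : ℕ} {ι : Type*} (x : Fin m → ℝ) (s : Finset ι)
    (f : ι → Fin m → ℝ) : (∑ a ∈ s, f a) ⬝ᵥ x = ∑ a ∈ s, f a ⬝ᵥ x := by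
  simp only [dotProduct, Finset.sum_apply, Finset.sum_mul]
  rw [Finset.sum_comm]

lemma dot_mulVec_swap {m : ℕ} (M : Matrix (Fin m) (Fin m) ℝ) (x y : Fin m → ℝ) :
    (M *ᵥ x) ⬝ᵥ y = x ⬝ᵥ (Mᵀ *ᵥ y) := by
  rw [Matrix.dotProduct_mulVec, Matrix.vecMul_transpose]

/-- The key summation-by-parts identity:
`h(u, Σ λ w) = Σ_α Σ_i I_i^α(u) (λ_{α,i+1} - λ_{α,i})`. -/
lemma hForm_key (m n k : ℕ) [NeZero n]
    (A B : ℤ → Matrix (Fin m) (Fin m) ℝ)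
    (hBper : ∀ i, B (i + n) = B i)
    (hAsym : ∀ i, (A i)ᵀ = A i)
    (w : Fin k → ℤ → (Fin m → ℝ))
    (hwper : ∀ α i, w α (i + n) = w α i)
    (hwsol : ∀ α i,
      A i *ᵥ w α i - B (i - 1) *ᵥ w α (i - 1) - (B i)ᵀ *ᵥ w α (i + 1) = 0)
    (u : Fin n → Fin m → ℝ) (lam : Fin k → Fin n → ℝ) :
    hForm m n A B u (fun i => ∑ α : Fin k, lam α i • w α ((i : ℕ) : ℤ))
      = ∑ α : Fin k, ∑ i : Fin n,
          ((B ((i : ℕ) : ℤ) *ᵥ w α ((i : ℕ) : ℤ)) ⬝ᵥ u (i + 1)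
            - (B ((i : ℕ) : ℤ) *ᵥ u i) ⬝ᵥ w α (((i : ℕ) : ℤ) + 1))
          * (lam α (i + 1) - lam α i) := by
  set F : Fin k → Fin n → ℝ := fun α i =>
    (B ((i : ℕ) : ℤ) *ᵥ w α ((i : ℕ) : ℤ)) ⬝ᵥ u (i + 1)
      - (B ((i : ℕ) : ℤ) *ᵥ u i) ⬝ᵥ w α (((i : ℕ) : ℤ) + 1) with hF
  set P : Fin k → Fin n → ℝ := fun α i =>
    (B (((i : ℕ) : ℤ) - 1) *ᵥ w α (((i : ℕ) : ℤ) - 1)) ⬝ᵥ u i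
      - (B (((i : ℕ) : ℤ) - 1) *ᵥ u (i - 1)) ⬝ᵥ w α ((i : ℕ) : ℤ) with hP
  -- the per-term identity
  have hterm : ∀ (i : Fin n) (α : Fin k),
      (A ((i : ℕ) : ℤ) *ᵥ u i - B (((i : ℕ) : ℤ) - 1) *ᵥ u (i - 1)
        - (B ((i : ℕ) : ℤ))ᵀ *ᵥ u (i + 1)) ⬝ᵥ w α ((i : ℕ) : ℤ)
      = P α i - F α i := by
    intro i α
    have hsol' : A ((i : ℕ) : ℤ) *ᵥ w α ((i : ℕ) : ℤ)
        = B (((i : ℕ) : ℤ) - 1) *ᵥ w α (((i : ℕ) : ℤ) - 1)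
          + (B ((i : ℕ) : ℤ))ᵀ *ᵥ w α (((i : ℕ) : ℤ) + 1) := by
      have h := hwsol α ((i : ℕ) : ℤ)
      have h2 := sub_eq_zero.mp h
      have h3 := eq_add_of_sub_eq h2
      rw [h3]
      exact add_comm _ _
    have e1 : (A ((i : ℕ) : ℤ) *ᵥ u i) ⬝ᵥ w α ((i : ℕ) : ℤ)
        = (B (((i : ℕ) : ℤ) - 1) *ᵥ w α (((i : ℕ) : ℤ) - 1)) ⬝ᵥ u i
          + (B ((i : ℕ) : ℤ) *ᵥ u i) ⬝ᵥ w α (((i : ℕ) : ℤ) + 1) := by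
      rw [dot_mulVec_swap, hAsym, hsol', dotProduct_add,
        ← dot_mulVec_swap, dotProduct_comm (u i)]
    have e2 : ((B ((i : ℕ) : ℤ))ᵀ *ᵥ u (i + 1)) ⬝ᵥ w α ((i : ℕ) : ℤ)
        = (B ((i : ℕ) : ℤ) *ᵥ w α ((i : ℕ) : ℤ)) ⬝ᵥ u (i + 1) := by
      rw [dot_mulVec_swap, Matrix.transpose_transpose,
        dotProduct_comm]
    simp only [sub_dotProduct, e1, e2, hF, hP]
    ring
  -- the shift identity P α (i+1) = F α i
  have hPF : ∀ (α : Fin k) (i : Fin n), P α (i + 1) = F α i := by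
    intro α i
    have hB1 : B ((((i + 1 : Fin n) : ℕ) : ℤ) - 1) = B ((i : ℕ) : ℤ) :=
      per_congr n B hBper (val_succ_sub_mod n i)
    have hw1 : w α ((((i + 1 : Fin n) : ℕ) : ℤ) - 1) = w α ((i : ℕ) : ℤ) :=
      per_congr n (w α) (hwper α) (val_succ_sub_mod n i)
    have hw2 : w α (((i + 1 : Fin n) : ℕ) : ℤ) = w α (((i : ℕ) : ℤ) + 1) :=
      per_congr n (w α) (hwper α) (val_succ_mod n i)
    simp only [hP, hF, hB1, hw1, hw2, add_sub_cancel_right]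
  -- expand hForm
  unfold hForm
  have hexp : ∀ i : Fin n,
      (A ((i : ℕ) : ℤ) *ᵥ u i - B (((i : ℕ) : ℤ) - 1) *ᵥ u (i - 1)
        - (B ((i : ℕ) : ℤ))ᵀ *ᵥ u (i + 1))
        ⬝ᵥ (∑ α : Fin k, lam α i • w α ((i : ℕ) : ℤ))
      = ∑ α : Fin k, lam α i * (P α i - F α i) := by
    intro i
    rw [dotProduct_comm, dot_sum_left]
    refine Finset.sum_congr rfl fun α _ => ?_
    rw [smul_dotProduct, smul_eq_mul, dotProduct_comm, hterm i α]
  rw [Finset.sum_congr rfl fun i _ => hexp i, Finset.sum_comm]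
  refine Finset.sum_congr rfl fun α _ => ?_
  have hshift : ∑ i : Fin n, lam α i * P α i = ∑ i : Fin n, lam α (i + 1) * F α i := by
    have := Equiv.sum_comp (Equiv.addRight (1 : Fin n))
      (fun i => lam α i * P α i)
    simp only [Equiv.coe_addRight] at this
    rw [← this]
    exact Finset.sum_congr rfl fun i _ => by rw [hPF α i]
  calc ∑ i : Fin n, lam α i * (P α i - F α i)
      = ∑ i : Fin n, (lam α i * P α i - lam α i * F α i) := by
        refine Finset.sum_congr rfl fun i _ => by ring
    _ = ∑ i : Fin n, lam α i * P α i - ∑ i : Fin n, lam α i * F α i :=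
        Finset.sum_sub_distrib _ _
    _ = ∑ i : Fin n, lam α (i + 1) * F α i - ∑ i : Fin n, lam α i * F α i := by
        rw [hshift]
    _ = ∑ i : Fin n, F α i * (lam α (i + 1) - lam α i) := by
        rw [← Finset.sum_sub_distrib]
        exact Finset.sum_congr rfl fun i _ => by ring

end Aux

/-- (i) `Y ⊥_h Z`; (ii) `Y` is the `h`-orthogonal complement of `Z`;
(iii) the restriction of `h` to `Z` is
`h(v,v) = Σ_i Σ_{α,β} g_i^{αβ} Δλ_{α,i} Δλ_{β,i}`. -/
theorem hessian_orthogonality (m n k : ℕ) (hm : 1 ≤ m) (hk1 : 1 ≤ k) (hkm : k ≤ m)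
    [NeZero n]
    (A B : ℤ → Matrix (Fin m) (Fin m) ℝ)
    (hAper : ∀ i, A (i + n) = A i) (hBper : ∀ i, B (i + n) = B i)
    (hAsym : ∀ i, (A i)ᵀ = A i) (hBinv : ∀ i, IsUnit (B i).det)
    (w : Fin k → ℤ → (Fin m → ℝ))
    (hwper : ∀ α i, w α (i + n) = w α i)
    (hwsol : ∀ α i,
      A i *ᵥ w α i - B (i - 1) *ᵥ w α (i - 1) - (B i)ᵀ *ᵥ w α (i + 1) = 0)
    (hiso : ∀ i α β,
      (B i *ᵥ w α i) ⬝ᵥ w β (i + 1) = (B i *ᵥ w β i) ⬝ᵥ w α (i + 1)) :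
    -- (i)
    (∀ u : Fin n → Fin m → ℝ, memY m n k B w u →
      ∀ lam : Fin k → Fin n → ℝ,
        hForm m n A B u (fun i => ∑ α : Fin k, lam α i • w α ((i : ℕ) : ℤ)) = 0) ∧
    -- (ii)
    (∀ u : Fin n → Fin m → ℝ,
      (∀ v : Fin n → Fin m → ℝ,
        (∃ lam : Fin k → Fin n → ℝ,
          ∀ i, v i = ∑ α : Fin k, lam α i • w α ((i : ℕ) : ℤ)) →
        hForm m n A B u v = 0) →
      memY m n k B w u) ∧
    -- (iii)
    (∀ lam : Fin k → Fin n → ℝ,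
      hForm m n A B (fun i => ∑ α : Fin k, lam α i • w α ((i : ℕ) : ℤ))
        (fun i => ∑ α : Fin k, lam α i • w α ((i : ℕ) : ℤ))
      = ∑ i : Fin n, ∑ α : Fin k, ∑ β : Fin k,
          ((B ((i : ℕ) : ℤ) *ᵥ w α ((i : ℕ) : ℤ)) ⬝ᵥ w β (((i : ℕ) : ℤ) + 1))
            * (lam α (i + 1) - lam α i) * (lam β (i + 1) - lam β i)) := by
  have key := hForm_key m n k A B hBper hAsym w hwper hwsol
  refine ⟨?_, ?_, ?_⟩
  · -- (i)
    intro u hu lam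
    rw [key u lam]
    refine Finset.sum_eq_zero fun α _ => ?_
    have hconst : ∀ i : Fin n,
        (B ((i : ℕ) : ℤ) *ᵥ w α ((i : ℕ) : ℤ)) ⬝ᵥ u (i + 1)
          - (B ((i : ℕ) : ℤ) *ᵥ u i) ⬝ᵥ w α (((i : ℕ) : ℤ) + 1)
        = (B ((0 : Fin n) : ℤ) *ᵥ w α ((0 : Fin n) : ℤ)) ⬝ᵥ u ((0 : Fin n) + 1)
          - (B ((0 : Fin n) : ℤ) *ᵥ u 0) ⬝ᵥ w α (((0 : Fin n) : ℤ) + 1) :=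
      fun i => hu α i 0
    calc ∑ i : Fin n, ((B ((i : ℕ) : ℤ) *ᵥ w α ((i : ℕ) : ℤ)) ⬝ᵥ u (i + 1)
            - (B ((i : ℕ) : ℤ) *ᵥ u i) ⬝ᵥ w α (((i : ℕ) : ℤ) + 1))
          * (lam α (i + 1) - lam α i)
        = ((B ((0 : Fin n) : ℤ) *ᵥ w α ((0 : Fin n) : ℤ)) ⬝ᵥ u ((0 : Fin n) + 1)
            - (B ((0 : Fin n) : ℤ) *ᵥ u 0) ⬝ᵥ w α (((0 : Fin n) : ℤ) + 1))
          * (∑ i : Fin n, lam α (i + 1) - ∑ i : Fin n, lam α i) := by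
          rw [mul_sub, Finset.mul_sum, Finset.mul_sum,
            ← Finset.sum_sub_distrib]
          refine Finset.sum_congr rfl fun i _ => ?_
          rw [hconst i]; ring
      _ = 0 := by
          have : ∑ i : Fin n, lam α (i + 1) = ∑ i : Fin n, lam α i := by
            have := Equiv.sum_comp (Equiv.addRight (1 : Fin n)) (lam α)
            simpa using this
          rw [this]; ring
  · -- (ii)
    intro u hu α j0 j1
    -- suffices to show F is invariant under +1
    set F : Fin n → ℝ := fun i =>
      (B ((i : ℕ) : ℤ) *ᵥ w α ((i : ℕ) : ℤ)) ⬝ᵥ u (i + 1)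
        - (B ((i : ℕ) : ℤ) *ᵥ u i) ⬝ᵥ w α (((i : ℕ) : ℤ) + 1) with hFdef
    show F j0 = F j1
    have hstep : ∀ j : Fin n, F j = F (j + 1) := by
      intro j
      classical
      set lam : Fin k → Fin n → ℝ := fun β i =>
        if β = α ∧ i = j + 1 then 1 else 0 with hlam
      have h0 := hu (fun i => ∑ β : Fin k, lam β i • w β ((i : ℕ) : ℤ))
        ⟨lam, fun _ => rfl⟩
      rw [key u lam] at h0
      have hsum : ∀ β : Fin k,
          (∑ i : Fin n, ((B ((i : ℕ) : ℤ) *ᵥ w β ((i : ℕ) : ℤ)) ⬝ᵥ u (i + 1)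
            - (B ((i : ℕ) : ℤ) *ᵥ u i) ⬝ᵥ w β (((i : ℕ) : ℤ) + 1))
            * (lam β (i + 1) - lam β i))
          = if β = α then F j - F (j + 1) else 0 := by
        intro β
        by_cases hβ : β = α
        · subst hβ
          have hv1 : ∀ i : Fin n, lam β i = if i = j + 1 then 1 else 0 := by
            intro i; simp [hlam]
          have hv2 : ∀ i : Fin n, lam β (i + 1) = if i = j then 1 else 0 := by
            intro i; simp [hlam, add_left_inj]
          have hterm : ∀ i : Fin n,
              F i * (lam β (i + 1) - lam β i)
              = (if i = j then F i else 0) - (if i = j + 1 then F i else 0) := by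
            intro i
            rw [hv2 i, hv1 i]
            by_cases h1 : i = j <;> by_cases h2 : i = j + 1
            · simp only [if_pos h1, if_pos h2]; ring
            · simp only [if_pos h1, if_neg h2]; ring
            · simp only [if_neg h1, if_pos h2]; ring
            · simp only [if_neg h1, if_neg h2]; ring
          simp only [hFdef] at hterm ⊢
          rw [Finset.sum_congr rfl fun i _ => hterm i, Finset.sum_sub_distrib,
            Finset.sum_ite_eq', Finset.sum_ite_eq']
          simp
        · simp [hlam, hβ]
      rw [Finset.sum_congr rfl fun β _ => hsum β] at h0
      simp at h0
      linarith
    open Fin.CommRing in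
    have hiter : ∀ (t : ℕ) (j : Fin n), F (j + (t : Fin n)) = F j := by
      intro t
      induction t with
      | zero => intro j; simp
      | succ s ih =>
          intro j
          have : ((s + 1 : ℕ) : Fin n) = (s : Fin n) + 1 := by push_cast; ring
          rw [this, ← add_assoc, ← hstep (j + (s : Fin n)), ih]
    open Fin.CommRing in
    have h0 : F j0 = F (j1 + ((j0 - j1 : Fin n).val : Fin n)) := by
      rw [Fin.cast_val_eq_self, add_comm, sub_add_cancel]
    rw [h0, hiter]
  · -- (iii)
    intro lam
    rw [key _ lam]
    have hFv : ∀ (α : Fin k) (i : Fin n),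
        (B ((i : ℕ) : ℤ) *ᵥ w α ((i : ℕ) : ℤ))
            ⬝ᵥ (∑ β : Fin k, lam β (i + 1) • w β (((i + 1 : Fin n) : ℕ) : ℤ))
          - (B ((i : ℕ) : ℤ) *ᵥ (∑ β : Fin k, lam β i • w β ((i : ℕ) : ℤ)))
            ⬝ᵥ w α (((i : ℕ) : ℤ) + 1)
        = ∑ β : Fin k,
            ((B ((i : ℕ) : ℤ) *ᵥ w α ((i : ℕ) : ℤ)) ⬝ᵥ w β (((i : ℕ) : ℤ) + 1))
            * (lam β (i + 1) - lam β i) := by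
      intro α i
      have hw2 : ∀ β, w β (((i + 1 : Fin n) : ℕ) : ℤ) = w β (((i : ℕ) : ℤ) + 1) :=
        fun β => per_congr n (w β) (hwper β) (val_succ_mod n i)
      have e1 : (B ((i : ℕ) : ℤ) *ᵥ w α ((i : ℕ) : ℤ))
            ⬝ᵥ (∑ β : Fin k, lam β (i + 1) • w β (((i + 1 : Fin n) : ℕ) : ℤ))
          = ∑ β : Fin k, lam β (i + 1)
              * ((B ((i : ℕ) : ℤ) *ᵥ w α ((i : ℕ) : ℤ)) ⬝ᵥ w β (((i : ℕ) : ℤ) + 1)) := by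
        rw [dot_sum_right]
        exact Finset.sum_congr rfl fun β _ => by
          rw [hw2 β, dotProduct_smul, smul_eq_mul]
      have e2 : (B ((i : ℕ) : ℤ) *ᵥ (∑ β : Fin k, lam β i • w β ((i : ℕ) : ℤ)))
            ⬝ᵥ w α (((i : ℕ) : ℤ) + 1)
          = ∑ β : Fin k, lam β i
              * ((B ((i : ℕ) : ℤ) *ᵥ w α ((i : ℕ) : ℤ)) ⬝ᵥ w β (((i : ℕ) : ℤ) + 1)) := by
        rw [dot_mulVec_swap, dot_sum_left]
        refine Finset.sum_congr rfl fun β _ => ?_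
        rw [smul_dotProduct, smul_eq_mul, ← dot_mulVec_swap,
          hiso ((i : ℕ) : ℤ) β α]
      rw [e1, e2, ← Finset.sum_sub_distrib]
      exact Finset.sum_congr rfl fun β _ => by ring
    rw [Finset.sum_comm]
    refine Finset.sum_congr rfl fun i _ => Finset.sum_congr rfl fun α _ => ?_
    rw [hFv α i, Finset.sum_mul]
    exact Finset.sum_congr rfl fun β _ => by ring
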